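/- arXiv:0808.0739 — 2 statements merged into one kernel-verified Lean document; each statement's English description precedes it below -/
import Mathlib

section
/- Let p be an odd prime and n ≥ p. Then χ(Θ(Cube(n, n−2))) ≡ 1 (mod p). -/
/-- A hypergraph on vertex type `V` is given by its set `H` of hyperedges
(subsets of `V`).  The theta complex `Θ(𝓗)` has as simplices the nonempty
finite subsets of `V` that are disjoint from at least one hyperedge. -/
def thetaComplex {V : Type*} (H : Set (Set V)) : Set (Finset V) :=
  {σ : Finset V | σ.Nonempty ∧ ∃ h ∈ H, ∀ v ∈ σ, v ∉ h}

/-- The geometric realization of a complex `K` of finite subsets of `V`: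
convex combinations of vertices supported on a simplex of `K`, topologized as a
subspace of `V → ℝ`. -/
def geomReal {V : Type*} (K : Set (Finset V)) : Set (V → ℝ) :=
  {f | (∀ v, 0 ≤ f v) ∧ ∃ σ ∈ K, (∀ v, f v ≠ 0 → v ∈ σ) ∧ ∑ v ∈ σ, f v = 1}

/-- The hypergraph `Cube(n,k)`: vertices are the vertices `{0,1}^n` of the
`n`-cube, and hyperedges are the vertex sets of the `k`-dimensional faces,
i.e. the subsets obtained by fixing `n - k` of the coordinates. -/
def cubeEdges (n k : ℕ) : Set (Set (Fin n → Bool)) :=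
  {e | ∃ (s : Finset (Fin n)) (g : Fin n → Bool),
    s.card = n - k ∧ e = {f | ∀ i ∈ s, f i = g i}}

/-- The Euler characteristic of a complex of (nonempty) finite simplices:
`χ(K) = Σ_{σ ∈ K} (-1)^(|σ|-1)`. -/
noncomputable def eulerChar {V : Type*} (K : Set (Finset V)) : ℤ :=
  ∑ᶠ σ ∈ K, (-1 : ℤ) ^ (σ.card - 1)

open Finset


abbrev VV (m : ℕ) := Fin m → Bool

def cov1 {m : ℕ} (W : Finset (VV m)) : Prop :=
  ∀ (i : Fin m) (a : Bool), ∃ f ∈ W, f i = a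

def cov2 {m : ℕ} (W : Finset (VV m)) : Prop :=
  ∀ (i j : Fin m), i ≠ j → ∀ (a b : Bool), ∃ f ∈ W, f i = a ∧ f j = b

instance {m : ℕ} : DecidablePred (cov1 (m := m)) := fun W => by
  unfold cov1; infer_instance

instance {m : ℕ} : DecidablePred (cov2 (m := m)) := fun W => by
  unfold cov2; infer_instance

/-- The signed sum over 2-covering subsets of the `m`-cube. -/
def TT (m : ℕ) : ℤ :=
  ∑ W : Finset (VV m), if cov2 W then (-1 : ℤ) ^ W.card else 0

lemma neg_one_pow_self_mul (k : ℕ) : (-1 : ℤ) ^ k * (-1) ^ k = 1 := by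
  rw [← mul_pow]; norm_num

lemma sign_sdiff {β : Type*} [DecidableEq β] {P U : Finset β} (h : P ⊆ U) :
    (-1 : ℤ) ^ (U \ P).card * (-1) ^ P.card = (-1) ^ U.card := by
  rw [← pow_add, Finset.card_sdiff_add_card_eq_card h]

lemma sign_sdiff' {β : Type*} [DecidableEq β] {P U : Finset β} (h : P ⊆ U) :
    (-1 : ℤ) ^ (U \ P).card = (-1) ^ U.card * (-1) ^ P.card := by
  have h1 := sign_sdiff h
  have h2 := neg_one_pow_self_mul P.card
  calc (-1 : ℤ) ^ (U \ P).card = (-1) ^ (U \ P).card * ((-1) ^ P.card * (-1) ^ P.card) := by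
        rw [h2, mul_one]
    _ = ((-1) ^ (U \ P).card * (-1) ^ P.card) * (-1) ^ P.card := by ring
    _ = (-1) ^ U.card * (-1) ^ P.card := by rw [h1]

/-- Sum of signs over supersets of `A` inside `Z`. -/
lemma subsum {β : Type*} [DecidableEq β] (A Z : Finset β) :
    ∑ P ∈ Z.powerset.filter (fun P => A ⊆ P), (-1 : ℤ) ^ P.card
      = if A = Z then (-1 : ℤ) ^ Z.card else 0 := by
  by_cases hAZ : A ⊆ Z
  · have hbij : ∑ P ∈ Z.powerset.filter (fun P => A ⊆ P), (-1 : ℤ) ^ P.card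
        = ∑ Q ∈ (Z \ A).powerset, (-1 : ℤ) ^ (Q.card + A.card) := by
      refine Finset.sum_nbij' (fun P => P \ A) (fun Q => Q ∪ A) ?_ ?_ ?_ ?_ ?_
      · intro P hP
        rw [Finset.mem_filter, Finset.mem_powerset] at hP
        rw [Finset.mem_powerset]
        exact Finset.sdiff_subset_sdiff hP.1 Finset.Subset.rfl
      · intro Q hQ
        rw [Finset.mem_powerset] at hQ
        rw [Finset.mem_filter, Finset.mem_powerset]
        constructor
        · exact Finset.union_subset (hQ.trans Finset.sdiff_subset) hAZ
        · exact Finset.subset_union_right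
      · intro P hP
        rw [Finset.mem_filter] at hP
        show P \ A ∪ A = P
        rw [Finset.sdiff_union_self_eq_union, Finset.union_eq_left.mpr hP.2]
      · intro Q hQ
        rw [Finset.mem_powerset] at hQ
        have hdisj : Disjoint Q A := (Finset.subset_sdiff.mp hQ).2
        show (Q ∪ A) \ A = Q
        rw [Finset.union_sdiff_cancel_right hdisj]
      · intro P hP
        rw [Finset.mem_filter] at hP
        have : (P \ A).card + A.card = P.card := Finset.card_sdiff_add_card_eq_card hP.2
        rw [this]
    rw [hbij]
    have : ∑ Q ∈ (Z \ A).powerset, (-1 : ℤ) ^ (Q.card + A.card)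
        = (∑ Q ∈ (Z \ A).powerset, (-1 : ℤ) ^ Q.card) * (-1) ^ A.card := by
      rw [Finset.sum_mul]
      exact Finset.sum_congr rfl (fun Q _ => by rw [pow_add])
    rw [this, Finset.sum_powerset_neg_one_pow_card]
    by_cases hA : A = Z
    · subst hA
      simp
    · have : Z \ A ≠ ∅ := by
        intro h
        exact hA (Finset.Subset.antisymm hAZ (Finset.sdiff_eq_empty_iff_subset.mp h))
      rw [if_neg this, if_neg hA, zero_mul]
  · have hempty : Z.powerset.filter (fun P => A ⊆ P) = ∅ := by
      rw [Finset.filter_eq_empty_iff]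
      intro P hP hAP
      exact hAZ (hAP.trans (Finset.mem_powerset.mp hP))
    rw [hempty, Finset.sum_empty, if_neg (by intro h; subst h; exact hAZ Finset.Subset.rfl)]

/-- Inclusion–exclusion expansion of the indicator of "no event occurs". -/
lemma expand {H : Type*} [Fintype H] [DecidableEq H] (pred : H → Prop) [DecidablePred pred] :
    (if (∀ h, ¬ pred h) then (1 : ℤ) else 0)
      = ∑ S ∈ (Finset.univ : Finset H).powerset,
          (-1 : ℤ) ^ S.card * (if ∀ h ∈ S, pred h then 1 else 0) := by
  have key := Finset.prod_add (fun h => if pred h then (-1 : ℤ) else 0) (fun _ => (1 : ℤ))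
    (Finset.univ : Finset H)
  have lhs_eq : (∏ h : H, ((if pred h then (-1 : ℤ) else 0) + 1))
      = (if (∀ h, ¬ pred h) then (1 : ℤ) else 0) := by
    have : ∀ h : H, ((if pred h then (-1 : ℤ) else 0) + 1) = (if ¬ pred h then 1 else 0) := by
      intro h; by_cases hh : pred h <;> simp [hh]
    rw [Finset.prod_congr rfl (fun h _ => this h), Finset.prod_boole]
    simp
  have term_eq : ∀ S ∈ (Finset.univ : Finset H).powerset,
      (∏ h ∈ S, (if pred h then (-1 : ℤ) else 0)) * (∏ _h ∈ Finset.univ \ S, (1:ℤ))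
        = (-1 : ℤ) ^ S.card * (if ∀ h ∈ S, pred h then 1 else 0) := by
    intro S _
    rw [Finset.prod_const_one, mul_one]
    have : ∀ h ∈ S, (if pred h then (-1 : ℤ) else 0) = (-1) * (if pred h then 1 else 0) := by
      intro h _; by_cases hh : pred h <;> simp [hh]
    rw [Finset.prod_congr rfl this, Finset.prod_mul_distrib, Finset.prod_const,
      Finset.prod_boole]
    simp [neg_one_pow_eq_pow_mod_two]
  rw [← lhs_eq, key]
  exact Finset.sum_congr rfl term_eq

section Halves

variable {m : ℕ}

/-- The trace on `U` of the half-cube `{f | f h.1 = h.2}`. -/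
def UH (U : Finset (VV m)) (h : Fin m × Bool) : Finset (VV m) :=
  U.filter (fun f => f h.1 = h.2)

lemma uh_subset (U : Finset (VV m)) (h : Fin m × Bool) : UH U h ⊆ U :=
  Finset.filter_subset _ _

lemma exists_ne_fin (hm : 2 ≤ m) (i : Fin m) : ∃ j : Fin m, j ≠ i :=
  Fintype.exists_ne_of_one_lt_card (by rw [Fintype.card_fin]; omega) i

lemma uh_nonempty (hm : 2 ≤ m) {U : Finset (VV m)} (hU : cov2 U) (h : Fin m × Bool) :
    (UH U h).Nonempty := by
  obtain ⟨j, hj⟩ := exists_ne_fin hm h.1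
  obtain ⟨f, hf, hf1, -⟩ := hU h.1 j (Ne.symm hj) h.2 true
  exact ⟨f, Finset.mem_filter.mpr ⟨hf, hf1⟩⟩

lemma uh_inter_nonempty {U : Finset (VV m)} (hU : cov2 U) {i j : Fin m} (hij : i ≠ j)
    (a b : Bool) : ((UH U (i, a)) ∩ (UH U (j, b))).Nonempty := by
  obtain ⟨f, hf, hf1, hf2⟩ := hU i j hij a b
  exact ⟨f, Finset.mem_inter.mpr ⟨Finset.mem_filter.mpr ⟨hf, hf1⟩,
    Finset.mem_filter.mpr ⟨hf, hf2⟩⟩⟩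

lemma disjoint_uh_iff (hm : 2 ≤ m) {U : Finset (VV m)} (hU : cov2 U)
    (h h' : Fin m × Bool) :
    Disjoint (UH U h) (UH U h') ↔ h' = (h.1, !h.2) := by
  obtain ⟨i, a⟩ := h
  obtain ⟨j, b⟩ := h'
  constructor
  · intro hd
    by_cases hij : i = j
    · subst hij
      by_cases hab : b = a
      · subst hab
        exfalso
        obtain ⟨f, hf⟩ := uh_nonempty hm hU (i, b)
        exact Finset.disjoint_left.mp hd hf hf
      · have : b = !a := by cases a <;> cases b <;> simp_all
        simp [this]
    · exfalso
      obtain ⟨f, hf⟩ := uh_inter_nonempty hU hij a b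
      rw [Finset.mem_inter] at hf
      exact Finset.disjoint_left.mp hd hf.1 hf.2
  · intro he
    rw [Prod.mk.injEq] at he
    obtain ⟨he1, he2⟩ := he
    subst he1; subst he2
    rw [Finset.disjoint_left]
    intro f hf hf'
    rw [UH, Finset.mem_filter] at hf hf'
    rw [hf.2] at hf'
    simp at hf'

lemma cov1_sdiff_iff {U P : Finset (VV m)} :
    cov1 (U \ P) ↔ ∀ h : Fin m × Bool, ¬ UH U h ⊆ P := by
  constructor
  · rintro hc ⟨i, a⟩ hsub
    obtain ⟨f, hf, hfa⟩ := hc i a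
    rw [Finset.mem_sdiff] at hf
    exact hf.2 (hsub (Finset.mem_filter.mpr ⟨hf.1, hfa⟩))
  · intro hh i a
    have := hh (i, a)
    rw [Finset.not_subset] at this
    obtain ⟨f, hfUH, hfP⟩ := this
    rw [UH, Finset.mem_filter] at hfUH
    exact ⟨f, Finset.mem_sdiff.mpr ⟨hfUH.1, hfP⟩, hfUH.2⟩

end Halves

section KEY

variable {m : ℕ}

/-- union of traces of the halves in `S` -/
def AS (U : Finset (VV m)) (S : Finset (Fin m × Bool)) : Finset (VV m) :=
  S.biUnion (fun h => UH U h)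

lemma AS_subset (U : Finset (VV m)) (S : Finset (Fin m × Bool)) : AS U S ⊆ U :=
  Finset.biUnion_subset.mpr (fun h _ => uh_subset U h)

/-- indicator expansion specialized -/
lemma ind_eq (U : Finset (VV m)) (P : Finset (VV m)) :
    (if cov1 (U \ P) then (1 : ℤ) else 0)
      = ∑ S ∈ (Finset.univ : Finset (Fin m × Bool)).powerset,
          (-1 : ℤ) ^ S.card * (if AS U S ⊆ P then (1 : ℤ) else 0) := by
  classical
  have h1 : (if cov1 (U \ P) then (1 : ℤ) else 0)
      = (if (∀ h : Fin m × Bool, ¬ UH U h ⊆ P) then (1 : ℤ) else 0) := by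
    by_cases hc : cov1 (U \ P)
    · rw [if_pos hc, if_pos (cov1_sdiff_iff.mp hc)]
    · rw [if_neg hc, if_neg (fun hh => hc (cov1_sdiff_iff.mpr hh))]
  rw [h1, expand (fun h => UH U h ⊆ P)]
  refine Finset.sum_congr rfl (fun S _ => ?_)
  congr 1
  by_cases hs : AS U S ⊆ P
  · rw [if_pos hs, if_pos (fun h hh => (Finset.subset_biUnion_of_mem _ hh).trans hs)]
  · rw [if_neg hs, if_neg (fun hh => hs (Finset.biUnion_subset.mpr hh))]

/-- the `allowed` set for the final evaluation -/
def allowed (S : Finset (Fin m × Bool)) : Finset (Fin m × Bool) :=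
  Finset.univ.filter (fun x => ∀ h ∈ S, x = (h.1, !h.2))

lemma allowed_empty_iff (hm : 2 ≤ m) (S : Finset (Fin m × Bool)) :
    allowed S = ∅ ↔ 2 ≤ S.card := by
  have hm1 : 1 ≤ m := le_trans (by norm_num) hm
  constructor
  · intro he
    by_contra hlt
    have hle : S.card ≤ 1 := by omega
    rcases Nat.le_one_iff_eq_zero_or_eq_one.mp hle with h0 | h1
    · rw [Finset.card_eq_zero] at h0
      subst h0
      have : (⟨⟨0, hm1⟩, true⟩ : Fin m × Bool) ∈ allowed (∅ : Finset (Fin m × Bool)) := by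
        simp [allowed]
      rw [he] at this
      exact absurd this (Finset.notMem_empty _)
    · rw [Finset.card_eq_one] at h1
      obtain ⟨h, rfl⟩ := h1
      have : (h.1, !h.2) ∈ allowed ({h} : Finset (Fin m × Bool)) := by
        simp [allowed]
      rw [he] at this
      exact absurd this (Finset.notMem_empty _)
  · intro h2
    rw [Finset.eq_empty_iff_forall_notMem]
    intro x hx
    rw [allowed, Finset.mem_filter] at hx
    obtain ⟨h, hh, h', hh', hne⟩ := Finset.one_lt_card.mp h2
    have e1 := hx.2 h hh
    have e2 := hx.2 h' hh'
    rw [e1, Prod.mk.injEq] at e2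
    exact hne (Prod.ext e2.1 (by simpa using e2.2))

/-- the final Boolean-pair sum -/
lemma final_sum (hm : 2 ≤ m) :
    ∑ S ∈ (Finset.univ : Finset (Fin m × Bool)).powerset,
        (-1 : ℤ) ^ S.card * (if 2 ≤ S.card then (1 : ℤ) else 0)
      = 2 * (m : ℤ) - 1 := by
  classical
  have hall : ∑ S ∈ (Finset.univ : Finset (Fin m × Bool)).powerset, (-1 : ℤ) ^ S.card = 0 := by
    rw [Finset.sum_powerset_neg_one_pow_card, if_neg]
    have hm1 : 1 ≤ m := le_trans (by norm_num) hm
    have : (⟨⟨0, hm1⟩, true⟩ : Fin m × Bool) ∈ (Finset.univ : Finset (Fin m × Bool)) :=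
      Finset.mem_univ _
    intro he
    rw [he] at this
    exact absurd this (Finset.notMem_empty _)
  have hsplit := Finset.sum_filter_add_sum_filter_not
    ((Finset.univ : Finset (Fin m × Bool)).powerset) (fun S => 2 ≤ S.card)
    (fun S => (-1 : ℤ) ^ S.card)
  have hleft : ∑ S ∈ (Finset.univ : Finset (Fin m × Bool)).powerset,
      (-1 : ℤ) ^ S.card * (if 2 ≤ S.card then (1 : ℤ) else 0)
      = ∑ S ∈ ((Finset.univ : Finset (Fin m × Bool)).powerset).filter (fun S => 2 ≤ S.card),
          (-1 : ℤ) ^ S.card := by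
    rw [Finset.sum_filter]
    refine Finset.sum_congr rfl (fun S _ => ?_)
    by_cases h : 2 ≤ S.card <;> simp [h]
  have hsmall : ((Finset.univ : Finset (Fin m × Bool)).powerset).filter
        (fun S => ¬ 2 ≤ S.card)
      = insert (∅ : Finset (Fin m × Bool))
          (Finset.univ.image (fun h : Fin m × Bool => ({h} : Finset (Fin m × Bool)))) := by
    ext S
    rw [Finset.mem_filter, Finset.mem_insert, Finset.mem_image]
    constructor
    · rintro ⟨-, hc⟩
      rcases Nat.le_one_iff_eq_zero_or_eq_one.mp (by omega : S.card ≤ 1) with h0 | h1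
      · exact Or.inl (Finset.card_eq_zero.mp h0)
      · obtain ⟨a, rfl⟩ := Finset.card_eq_one.mp h1
        exact Or.inr ⟨a, Finset.mem_univ a, rfl⟩
    · rintro (rfl | ⟨a, -, rfl⟩)
      · exact ⟨Finset.mem_powerset.mpr (Finset.empty_subset _), by simp⟩
      · exact ⟨Finset.mem_powerset.mpr (by simp), by simp⟩
  have hsmallsum : ∑ S ∈ ((Finset.univ : Finset (Fin m × Bool)).powerset).filter
        (fun S => ¬ 2 ≤ S.card), (-1 : ℤ) ^ S.card = 1 - 2 * (m : ℤ) := by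
    rw [hsmall, Finset.sum_insert, Finset.sum_image]
    · have : ∀ h : Fin m × Bool, (-1 : ℤ) ^ ({h} : Finset (Fin m × Bool)).card = -1 := by
        intro h; simp
      rw [Finset.sum_congr rfl (fun h _ => this h), Finset.sum_const, Finset.card_univ]
      simp [Fintype.card_prod]
      ring
    · intro x _ y _ e
      exact Finset.singleton_injective e
    · rw [Finset.mem_image]
      rintro ⟨a, -, ha⟩
      exact Finset.singleton_ne_empty a ha
  rw [hleft]
  have := hsplit
  rw [hsmallsum, hall] at this
  linarith

end KEY

section KEY2
variable {m : ℕ}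

lemma inner_P0_eval {U : Finset (VV m)} (S0 S1 : Finset (Fin m × Bool)) :
    ∑ P0 ∈ U.powerset,
        (if AS U S0 ⊆ P0 then (1 : ℤ) else 0) * (-1) ^ P0.card *
          (if AS U S1 = U \ P0 then (-1 : ℤ) ^ (U \ P0).card else 0)
      = if Disjoint (AS U S0) (AS U S1) then (-1 : ℤ) ^ U.card else 0 := by
  classical
  have hA1U : AS U S1 ⊆ U := AS_subset U S1
  have hA0U : AS U S0 ⊆ U := AS_subset U S0
  rw [Finset.sum_eq_single_of_mem (U \ AS U S1)
      (Finset.mem_powerset.mpr Finset.sdiff_subset)]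
  · have e : U \ (U \ AS U S1) = AS U S1 := Finset.sdiff_sdiff_eq_self hA1U
    rw [e, if_pos rfl]
    by_cases hd : Disjoint (AS U S0) (AS U S1)
    · rw [if_pos (Finset.subset_sdiff.mpr ⟨hA0U, hd⟩), if_pos hd, one_mul]
      exact sign_sdiff hA1U
    · rw [if_neg (fun hs => hd (Finset.subset_sdiff.mp hs).2), if_neg hd,
        zero_mul, zero_mul]
  · intro P0 hP0 hne
    have h' : ¬ (AS U S1 = U \ P0) := by
      intro he
      apply hne
      rw [he, Finset.sdiff_sdiff_eq_self (Finset.mem_powerset.mp hP0)]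
    rw [if_neg h', mul_zero]

lemma inner_S1_eval (hm : 2 ≤ m) {U : Finset (VV m)} (hU : cov2 U)
    (S0 : Finset (Fin m × Bool)) :
    ∑ S1 ∈ (Finset.univ : Finset (Fin m × Bool)).powerset,
        (-1 : ℤ) ^ S1.card * (if Disjoint (AS U S0) (AS U S1) then (1 : ℤ) else 0)
      = if 2 ≤ S0.card then (1 : ℤ) else 0 := by
  classical
  have hdis : ∀ S1 : Finset (Fin m × Bool),
      Disjoint (AS U S0) (AS U S1) ↔ S1 ⊆ allowed S0 := by
    intro S1
    simp only [AS]
    rw [Finset.disjoint_biUnion_left]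
    constructor
    · intro hd h1 hh1
      rw [allowed, Finset.mem_filter]
      refine ⟨Finset.mem_univ _, fun h0 hh0 => ?_⟩
      have := hd h0 hh0
      rw [Finset.disjoint_biUnion_right] at this
      exact (disjoint_uh_iff hm hU h0 h1).mp (this h1 hh1)
    · intro hsub h0 hh0
      rw [Finset.disjoint_biUnion_right]
      intro h1 hh1
      have := hsub hh1
      rw [allowed, Finset.mem_filter] at this
      exact (disjoint_uh_iff hm hU h0 h1).mpr (this.2 h0 hh0)
  have step1 : ∑ S1 ∈ (Finset.univ : Finset (Fin m × Bool)).powerset,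
      (-1 : ℤ) ^ S1.card * (if Disjoint (AS U S0) (AS U S1) then (1 : ℤ) else 0)
      = ∑ S1 ∈ ((Finset.univ : Finset (Fin m × Bool)).powerset).filter
          (fun S1 => S1 ⊆ allowed S0), (-1 : ℤ) ^ S1.card := by
    rw [Finset.sum_filter]
    refine Finset.sum_congr rfl (fun S1 _ => ?_)
    by_cases h : S1 ⊆ allowed S0
    · rw [if_pos h, if_pos ((hdis S1).mpr h), mul_one]
    · rw [if_neg h, if_neg (fun hd => h ((hdis S1).mp hd)), mul_zero]
  have step2 : ((Finset.univ : Finset (Fin m × Bool)).powerset).filter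
      (fun S1 => S1 ⊆ allowed S0) = (allowed S0).powerset := by
    ext S1
    rw [Finset.mem_filter, Finset.mem_powerset, Finset.mem_powerset]
    exact ⟨fun h => h.2, fun h => ⟨Finset.subset_univ _, h⟩⟩
  rw [step1, step2, Finset.sum_powerset_neg_one_pow_card]
  by_cases h : 2 ≤ S0.card
  · rw [if_pos ((allowed_empty_iff hm S0).mpr h), if_pos h]
  · rw [if_neg (fun he => h ((allowed_empty_iff hm S0).mp he)), if_neg h]

lemma sumB (U Z : Finset (VV m)) :
    ∑ P1 ∈ Z.powerset, (if cov1 (U \ P1) then (1 : ℤ) else 0) * (-1) ^ P1.card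
      = ∑ S1 ∈ (Finset.univ : Finset (Fin m × Bool)).powerset,
          (-1 : ℤ) ^ S1.card * (if AS U S1 = Z then (-1 : ℤ) ^ Z.card else 0) := by
  classical
  calc ∑ P1 ∈ Z.powerset, (if cov1 (U \ P1) then (1 : ℤ) else 0) * (-1) ^ P1.card
      = ∑ P1 ∈ Z.powerset, ∑ S1 ∈ (Finset.univ : Finset (Fin m × Bool)).powerset,
          ((-1 : ℤ) ^ S1.card * (if AS U S1 ⊆ P1 then (1 : ℤ) else 0)) * (-1) ^ P1.card := by
        refine Finset.sum_congr rfl (fun P1 _ => ?_)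
        rw [ind_eq U P1, Finset.sum_mul]
    _ = ∑ S1 ∈ (Finset.univ : Finset (Fin m × Bool)).powerset, ∑ P1 ∈ Z.powerset,
          ((-1 : ℤ) ^ S1.card * (if AS U S1 ⊆ P1 then (1 : ℤ) else 0)) * (-1) ^ P1.card :=
        Finset.sum_comm
    _ = ∑ S1 ∈ (Finset.univ : Finset (Fin m × Bool)).powerset,
          (-1 : ℤ) ^ S1.card * ∑ P1 ∈ Z.powerset,
            (if AS U S1 ⊆ P1 then (-1 : ℤ) ^ P1.card else 0) := by
        refine Finset.sum_congr rfl (fun S1 _ => ?_)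
        rw [Finset.mul_sum]
        refine Finset.sum_congr rfl (fun P1 _ => ?_)
        by_cases h : AS U S1 ⊆ P1 <;> simp [h]
    _ = ∑ S1 ∈ (Finset.univ : Finset (Fin m × Bool)).powerset,
          (-1 : ℤ) ^ S1.card * (if AS U S1 = Z then (-1 : ℤ) ^ Z.card else 0) := by
        refine Finset.sum_congr rfl (fun S1 _ => ?_)
        rw [← Finset.sum_filter, subsum]

lemma key (hm : 2 ≤ m) {U : Finset (VV m)} (hU : cov2 U) :
    ∑ P0 ∈ U.powerset, ∑ P1 ∈ (U \ P0).powerset,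
        (if cov1 (U \ P0) then (1 : ℤ) else 0) *
          ((if cov1 (U \ P1) then (1 : ℤ) else 0) * ((-1) ^ P0.card * (-1) ^ P1.card))
      = (2 * (m : ℤ) - 1) * (-1) ^ U.card := by
  classical
  calc ∑ P0 ∈ U.powerset, ∑ P1 ∈ (U \ P0).powerset,
        (if cov1 (U \ P0) then (1 : ℤ) else 0) *
          ((if cov1 (U \ P1) then (1 : ℤ) else 0) * ((-1) ^ P0.card * (-1) ^ P1.card))
      = ∑ P0 ∈ U.powerset, (if cov1 (U \ P0) then (1 : ℤ) else 0) * (-1) ^ P0.card *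
          ∑ P1 ∈ (U \ P0).powerset,
            (if cov1 (U \ P1) then (1 : ℤ) else 0) * (-1) ^ P1.card := by
        refine Finset.sum_congr rfl (fun P0 _ => ?_)
        rw [Finset.mul_sum]
        exact Finset.sum_congr rfl (fun P1 _ => by ring)
    _ = ∑ P0 ∈ U.powerset, (if cov1 (U \ P0) then (1 : ℤ) else 0) * (-1) ^ P0.card *
          ∑ S1 ∈ (Finset.univ : Finset (Fin m × Bool)).powerset,
            (-1 : ℤ) ^ S1.card *
              (if AS U S1 = U \ P0 then (-1 : ℤ) ^ (U \ P0).card else 0) := by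
        refine Finset.sum_congr rfl (fun P0 _ => ?_)
        rw [sumB U (U \ P0)]
    _ = ∑ S1 ∈ (Finset.univ : Finset (Fin m × Bool)).powerset, ∑ P0 ∈ U.powerset,
          (-1 : ℤ) ^ S1.card * ((if cov1 (U \ P0) then (1 : ℤ) else 0) * (-1) ^ P0.card *
            (if AS U S1 = U \ P0 then (-1 : ℤ) ^ (U \ P0).card else 0)) := by
        rw [← Finset.sum_comm]
        refine Finset.sum_congr rfl (fun P0 _ => ?_)
        rw [Finset.mul_sum]
        exact Finset.sum_congr rfl (fun S1 _ => by ring)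
    _ = ∑ S1 ∈ (Finset.univ : Finset (Fin m × Bool)).powerset, (-1 : ℤ) ^ S1.card *
          ∑ S0 ∈ (Finset.univ : Finset (Fin m × Bool)).powerset, (-1 : ℤ) ^ S0.card *
            (if Disjoint (AS U S0) (AS U S1) then (-1 : ℤ) ^ U.card else 0) := by
        refine Finset.sum_congr rfl (fun S1 _ => ?_)
        rw [← Finset.mul_sum]
        congr 1
        calc ∑ P0 ∈ U.powerset,
              (if cov1 (U \ P0) then (1 : ℤ) else 0) * (-1) ^ P0.card *
                (if AS U S1 = U \ P0 then (-1 : ℤ) ^ (U \ P0).card else 0)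
            = ∑ P0 ∈ U.powerset, ∑ S0 ∈ (Finset.univ : Finset (Fin m × Bool)).powerset,
                (-1 : ℤ) ^ S0.card * ((if AS U S0 ⊆ P0 then (1 : ℤ) else 0) * (-1) ^ P0.card *
                  (if AS U S1 = U \ P0 then (-1 : ℤ) ^ (U \ P0).card else 0)) := by
              refine Finset.sum_congr rfl (fun P0 _ => ?_)
              rw [ind_eq U P0, Finset.sum_mul, Finset.sum_mul]
              exact Finset.sum_congr rfl (fun S0 _ => by ring)
          _ = ∑ S0 ∈ (Finset.univ : Finset (Fin m × Bool)).powerset,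
                (-1 : ℤ) ^ S0.card * ∑ P0 ∈ U.powerset,
                  (if AS U S0 ⊆ P0 then (1 : ℤ) else 0) * (-1) ^ P0.card *
                    (if AS U S1 = U \ P0 then (-1 : ℤ) ^ (U \ P0).card else 0) := by
              rw [Finset.sum_comm]
              exact Finset.sum_congr rfl (fun S0 _ => by rw [Finset.mul_sum])
          _ = ∑ S0 ∈ (Finset.univ : Finset (Fin m × Bool)).powerset, (-1 : ℤ) ^ S0.card *
                (if Disjoint (AS U S0) (AS U S1) then (-1 : ℤ) ^ U.card else 0) := by
              exact Finset.sum_congr rfl (fun S0 _ => by rw [inner_P0_eval])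
    _ = ∑ S1 ∈ (Finset.univ : Finset (Fin m × Bool)).powerset,
          ∑ S0 ∈ (Finset.univ : Finset (Fin m × Bool)).powerset,
            (-1 : ℤ) ^ S1.card * ((-1 : ℤ) ^ S0.card *
              (if Disjoint (AS U S0) (AS U S1) then (-1 : ℤ) ^ U.card else 0)) := by
        refine Finset.sum_congr rfl (fun S1 _ => ?_)
        rw [Finset.mul_sum]
    _ = ∑ S0 ∈ (Finset.univ : Finset (Fin m × Bool)).powerset,
          ∑ S1 ∈ (Finset.univ : Finset (Fin m × Bool)).powerset,
            (-1 : ℤ) ^ S1.card * ((-1 : ℤ) ^ S0.card *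
              (if Disjoint (AS U S0) (AS U S1) then (-1 : ℤ) ^ U.card else 0)) :=
        Finset.sum_comm
    _ = (-1 : ℤ) ^ U.card * ∑ S0 ∈ (Finset.univ : Finset (Fin m × Bool)).powerset,
          (-1 : ℤ) ^ S0.card *
            ∑ S1 ∈ (Finset.univ : Finset (Fin m × Bool)).powerset, (-1 : ℤ) ^ S1.card *
              (if Disjoint (AS U S0) (AS U S1) then (1 : ℤ) else 0) := by
        rw [Finset.mul_sum]
        refine Finset.sum_congr rfl (fun S0 _ => ?_)
        rw [Finset.mul_sum, Finset.mul_sum]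
        refine Finset.sum_congr rfl (fun S1 _ => ?_)
        by_cases h : Disjoint (AS U S0) (AS U S1)
        · rw [if_pos h, if_pos h]
          ring
        · rw [if_neg h, if_neg h]
          ring
    _ = (-1 : ℤ) ^ U.card * ∑ S0 ∈ (Finset.univ : Finset (Fin m × Bool)).powerset,
          (-1 : ℤ) ^ S0.card * (if 2 ≤ S0.card then (1 : ℤ) else 0) := by
        congr 1
        exact Finset.sum_congr rfl (fun S0 _ => by rw [inner_S1_eval hm hU])
    _ = (2 * (m : ℤ) - 1) * (-1) ^ U.card := by
        rw [final_sum hm]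
        ring

end KEY2

section Glue
variable {m : ℕ}

/-- extend a vertex of the `m`-cube by a last coordinate -/
def ext (b : Bool) (f : VV m) : VV (m + 1) := Fin.snoc f b

/-- combine a pair of subsets of the `m`-cube into a subset of the `(m+1)`-cube -/
def glue (q : Finset (VV m) × Finset (VV m)) : Finset (VV (m + 1)) :=
  q.1.image (ext false) ∪ q.2.image (ext true)

def split (W : Finset (VV (m + 1))) : Finset (VV m) × Finset (VV m) :=
  ((W.filter (fun f => f (Fin.last m) = false)).image Fin.init,
   (W.filter (fun f => f (Fin.last m) = true)).image Fin.init)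

lemma ext_last (b : Bool) (f : VV m) : ext b f (Fin.last m) = b := Fin.snoc_last _ _

lemma ext_castSucc (b : Bool) (f : VV m) (i : Fin m) : ext b f i.castSucc = f i :=
  Fin.snoc_castSucc _ _ _

lemma ext_injective (b : Bool) : Function.Injective (ext (m := m) b) := by
  intro f g h
  funext i
  have := congrFun h i.castSucc
  rwa [ext_castSucc, ext_castSucc] at this

lemma init_ext (b : Bool) (f : VV m) : Fin.init (ext b f) = f := by
  funext i
  rw [Fin.init, ext_castSucc]

lemma ext_init (f : VV (m + 1)) : ext (f (Fin.last m)) (Fin.init f) = f :=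
  Fin.snoc_init_self f

lemma mem_glue (q : Finset (VV m) × Finset (VV m)) (f : VV (m + 1)) :
    f ∈ glue q ↔ (f (Fin.last m) = false ∧ Fin.init f ∈ q.1) ∨
      (f (Fin.last m) = true ∧ Fin.init f ∈ q.2) := by
  rw [glue, Finset.mem_union, Finset.mem_image, Finset.mem_image]
  constructor
  · rintro (⟨g, hg, rfl⟩ | ⟨g, hg, rfl⟩)
    · exact Or.inl ⟨ext_last _ _, by rwa [init_ext]⟩
    · exact Or.inr ⟨ext_last _ _, by rwa [init_ext]⟩
  · rintro (⟨hl, hi⟩ | ⟨hl, hi⟩)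
    · exact Or.inl ⟨Fin.init f, hi, by rw [← hl, ext_init]⟩
    · exact Or.inr ⟨Fin.init f, hi, by rw [← hl, ext_init]⟩

lemma glue_split (W : Finset (VV (m + 1))) : glue (split W) = W := by
  ext f
  rw [mem_glue]
  constructor
  · rintro (⟨hl, hi⟩ | ⟨hl, hi⟩) <;>
    · rw [split] at hi
      simp only [Finset.mem_image, Finset.mem_filter] at hi
      obtain ⟨g, ⟨hg, hgl⟩, hgi⟩ := hi
      have hfg : g = f := by
        rw [← ext_init g, ← ext_init f, hgl, hgi, hl]
      rwa [← hfg]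
  · intro hf
    rcases Bool.dichotomy (f (Fin.last m)) with hl | hl
    · refine Or.inl ⟨hl, ?_⟩
      rw [split]
      simp only [Finset.mem_image, Finset.mem_filter]
      exact ⟨f, ⟨hf, hl⟩, rfl⟩
    · refine Or.inr ⟨hl, ?_⟩
      rw [split]
      simp only [Finset.mem_image, Finset.mem_filter]
      exact ⟨f, ⟨hf, hl⟩, rfl⟩

lemma split_glue (q : Finset (VV m) × Finset (VV m)) : split (glue q) = q := by
  have h1 : ∀ (b : Bool) (X Y : Finset (VV m)),
      ((X.image (ext false) ∪ Y.image (ext true)).filter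
        (fun f => f (Fin.last m) = b)).image Fin.init = if b then Y else X := by
    intro b X Y
    ext g
    simp only [Finset.mem_image, Finset.mem_filter, Finset.mem_union]
    constructor
    · rintro ⟨f, ⟨hf | hf, hl⟩, hi⟩
      · obtain ⟨g', hg', rfl⟩ := hf
        rw [ext_last] at hl
        rw [init_ext] at hi
        subst hi
        rw [← hl]
        simpa using hg'
      · obtain ⟨g', hg', rfl⟩ := hf
        rw [ext_last] at hl
        rw [init_ext] at hi
        subst hi
        rw [← hl]
        simpa using hg'
    · intro hg
      cases b with
      | false =>
        simp only [Bool.false_eq_true, if_false] at hg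
        exact ⟨ext false g, ⟨Or.inl ⟨g, hg, rfl⟩, ext_last _ _⟩, init_ext _ _⟩
      | true =>
        simp only [if_true] at hg
        exact ⟨ext true g, ⟨Or.inr ⟨g, hg, rfl⟩, ext_last _ _⟩, init_ext _ _⟩
  rw [split, glue]
  refine Prod.ext ?_ ?_
  · exact (h1 false q.1 q.2).trans (by simp)
  · exact (h1 true q.1 q.2).trans (by simp)

lemma card_glue (q : Finset (VV m) × Finset (VV m)) :
    (glue q).card = q.1.card + q.2.card := by
  rw [glue, Finset.card_union_of_disjoint, Finset.card_image_of_injective _ (ext_injective false),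
    Finset.card_image_of_injective _ (ext_injective true)]
  rw [Finset.disjoint_left]
  rintro f hf hf'
  rw [Finset.mem_image] at hf hf'
  obtain ⟨g, -, rfl⟩ := hf
  obtain ⟨g', -, he⟩ := hf'
  have := congrFun he (Fin.last m)
  rw [ext_last, ext_last] at this
  exact absurd this (by decide)

lemma cov2_glue_iff (q : Finset (VV m) × Finset (VV m)) :
    cov2 (glue q) ↔ cov1 q.1 ∧ cov1 q.2 ∧ cov2 (q.1 ∪ q.2) := by
  constructor
  · intro hc
    refine ⟨?_, ?_, ?_⟩
    · intro i a
      obtain ⟨f, hf, hfa, hfl⟩ := hc i.castSucc (Fin.last m)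
        (Fin.castSucc_lt_last i).ne a false
      rw [mem_glue] at hf
      rcases hf with ⟨-, hi⟩ | ⟨hl, -⟩
      · exact ⟨Fin.init f, hi, by rwa [Fin.init]⟩
      · rw [hfl] at hl; exact absurd hl (by decide)
    · intro i a
      obtain ⟨f, hf, hfa, hfl⟩ := hc i.castSucc (Fin.last m)
        (Fin.castSucc_lt_last i).ne a true
      rw [mem_glue] at hf
      rcases hf with ⟨hl, -⟩ | ⟨-, hi⟩
      · rw [hfl] at hl; exact absurd hl (by decide)
      · exact ⟨Fin.init f, hi, by rwa [Fin.init]⟩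
    · intro i j hij a b
      obtain ⟨f, hf, hfa, hfb⟩ := hc i.castSucc j.castSucc
        (fun he => hij (Fin.castSucc_injective m he)) a b
      rw [mem_glue] at hf
      rcases hf with ⟨-, hi⟩ | ⟨-, hi⟩
      · exact ⟨Fin.init f, Finset.mem_union_left _ hi, by rwa [Fin.init], by rwa [Fin.init]⟩
      · exact ⟨Fin.init f, Finset.mem_union_right _ hi, by rwa [Fin.init], by rwa [Fin.init]⟩
  · rintro ⟨h1, h2, h12⟩
    intro i j hij a b
    induction i using Fin.lastCases with
    | last =>
      induction j using Fin.lastCases with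
      | last => exact absurd rfl hij
      | cast j' =>
        -- need f with f last = a, f castSucc j' = b
        cases a with
        | false =>
          obtain ⟨g, hg, hgb⟩ := h1 j' b
          refine ⟨ext false g, ?_, ext_last _ _, by rwa [ext_castSucc]⟩
          rw [mem_glue]
          exact Or.inl ⟨ext_last _ _, by rwa [init_ext]⟩
        | true =>
          obtain ⟨g, hg, hgb⟩ := h2 j' b
          refine ⟨ext true g, ?_, ext_last _ _, by rwa [ext_castSucc]⟩
          rw [mem_glue]
          exact Or.inr ⟨ext_last _ _, by rwa [init_ext]⟩
    | cast i' =>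
      induction j using Fin.lastCases with
      | last =>
        cases b with
        | false =>
          obtain ⟨g, hg, hga⟩ := h1 i' a
          refine ⟨ext false g, ?_, by rwa [ext_castSucc], ext_last _ _⟩
          rw [mem_glue]
          exact Or.inl ⟨ext_last _ _, by rwa [init_ext]⟩
        | true =>
          obtain ⟨g, hg, hga⟩ := h2 i' a
          refine ⟨ext true g, ?_, by rwa [ext_castSucc], ext_last _ _⟩
          rw [mem_glue]
          exact Or.inr ⟨ext_last _ _, by rwa [init_ext]⟩
      | cast j' =>
        have hij' : i' ≠ j' := fun he => hij (by rw [he])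
        obtain ⟨g, hg, hga, hgb⟩ := h12 i' j' hij' a b
        rw [Finset.mem_union] at hg
        rcases hg with hg | hg
        · refine ⟨ext false g, ?_, by rwa [ext_castSucc], by rwa [ext_castSucc]⟩
          rw [mem_glue]
          exact Or.inl ⟨ext_last _ _, by rwa [init_ext]⟩
        · refine ⟨ext true g, ?_, by rwa [ext_castSucc], by rwa [ext_castSucc]⟩
          rw [mem_glue]
          exact Or.inr ⟨ext_last _ _, by rwa [init_ext]⟩

end Glue


section Recursion
variable {m : ℕ}

lemma glue_bijective : Function.Bijective (glue (m := m)) :=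
  Function.bijective_iff_has_inverse.mpr ⟨split, split_glue, glue_split⟩

lemma fiber_eval (hm : 2 ≤ m) (U : Finset (VV m)) (hU : cov2 U) :
    ∑ q ∈ Finset.univ.filter (fun q : Finset (VV m) × Finset (VV m) => q.1 ∪ q.2 = U),
        (if cov1 q.1 then (1 : ℤ) else 0) *
          ((if cov1 q.2 then (1 : ℤ) else 0) * ((-1) ^ q.1.card * (-1) ^ q.2.card))
      = (2 * (m : ℤ) - 1) * (-1) ^ U.card := by
  classical
  rw [← key hm hU]
  refine Eq.trans ?_ (Finset.sum_sigma U.powerset (fun P0 => (U \ P0).powerset)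
    (fun r : Σ _ : Finset (VV m), Finset (VV m) =>
      (if cov1 (U \ r.1) then (1 : ℤ) else 0) *
        ((if cov1 (U \ r.2) then (1 : ℤ) else 0) * ((-1) ^ r.1.card * (-1) ^ r.2.card))))
  refine Finset.sum_nbij' (fun q => ⟨U \ q.2, U \ q.1⟩)
    (fun r => (U \ r.2, U \ r.1)) ?_ ?_ ?_ ?_ ?_
  · intro q hq
    rw [Finset.mem_filter] at hq
    rw [Finset.mem_sigma, Finset.mem_powerset, Finset.mem_powerset]
    have hq2U : q.2 ⊆ U := hq.2 ▸ Finset.subset_union_right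
    refine ⟨Finset.sdiff_subset, ?_⟩
    rw [Finset.sdiff_sdiff_eq_self hq2U]
    intro x hx
    rw [Finset.mem_sdiff] at hx
    have : x ∈ q.1 ∪ q.2 := hq.2.symm ▸ hx.1
    rw [Finset.mem_union] at this
    exact this.resolve_left hx.2
  · intro r hr
    rw [Finset.mem_sigma, Finset.mem_powerset, Finset.mem_powerset] at hr
    rw [Finset.mem_filter]
    refine ⟨Finset.mem_univ _, ?_⟩
    have hdisj : Disjoint r.2 r.1 := (Finset.subset_sdiff.mp hr.2).2
    have : (U \ r.2) ∪ (U \ r.1) = U \ (r.2 ∩ r.1) := by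
      rw [Finset.sdiff_inter_distrib_right]
    rw [this, Finset.disjoint_iff_inter_eq_empty.mp hdisj, Finset.sdiff_empty]
  · intro q hq
    rw [Finset.mem_filter] at hq
    have hq1U : q.1 ⊆ U := hq.2 ▸ Finset.subset_union_left
    have hq2U : q.2 ⊆ U := hq.2 ▸ Finset.subset_union_right
    show (U \ (U \ q.1), U \ (U \ q.2)) = q
    rw [Finset.sdiff_sdiff_eq_self hq1U, Finset.sdiff_sdiff_eq_self hq2U]
  · intro r hr
    rw [Finset.mem_sigma, Finset.mem_powerset, Finset.mem_powerset] at hr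
    have hr1U : r.1 ⊆ U := hr.1
    have hr2U : r.2 ⊆ U := hr.2.trans Finset.sdiff_subset
    show (⟨U \ (U \ r.1), U \ (U \ r.2)⟩ : (_ : Finset (VV m)) × Finset (VV m)) = r
    rw [Finset.sdiff_sdiff_eq_self hr1U, Finset.sdiff_sdiff_eq_self hr2U]
  · intro q hq
    rw [Finset.mem_filter] at hq
    have hq1U : q.1 ⊆ U := hq.2 ▸ Finset.subset_union_left
    have hq2U : q.2 ⊆ U := hq.2 ▸ Finset.subset_union_right
    show _ = (if cov1 (U \ (U \ q.2)) then (1 : ℤ) else 0) *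
      ((if cov1 (U \ (U \ q.1)) then (1 : ℤ) else 0) *
        ((-1) ^ (U \ q.2).card * (-1) ^ (U \ q.1).card))
    rw [Finset.sdiff_sdiff_eq_self hq1U, Finset.sdiff_sdiff_eq_self hq2U,
      sign_sdiff' hq1U, sign_sdiff' hq2U]
    have hUU : ((-1 : ℤ) ^ U.card * (-1) ^ q.2.card) * ((-1 : ℤ) ^ U.card * (-1) ^ q.1.card)
        = (-1 : ℤ) ^ q.1.card * (-1) ^ q.2.card := by
      rw [mul_mul_mul_comm, neg_one_pow_self_mul, one_mul, mul_comm]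
    rw [hUU]
    ring

lemma TT_succ (hm : 2 ≤ m) : TT (m + 1) = (2 * (m : ℤ) - 1) * TT m := by
  classical
  have h1 : TT (m + 1) = ∑ q : Finset (VV m) × Finset (VV m),
      if (cov1 q.1 ∧ cov1 q.2 ∧ cov2 (q.1 ∪ q.2)) then (-1 : ℤ) ^ (q.1.card + q.2.card)
      else 0 := by
    rw [TT]
    refine (Fintype.sum_bijective glue glue_bijective _ _ (fun q => ?_)).symm
    rw [card_glue]
    by_cases h : cov1 q.1 ∧ cov1 q.2 ∧ cov2 (q.1 ∪ q.2)
    · rw [if_pos h, if_pos ((cov2_glue_iff q).mpr h)]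
    · rw [if_neg h, if_neg (fun hc => h ((cov2_glue_iff q).mp hc))]
  have h2 : ∑ q : Finset (VV m) × Finset (VV m),
      (if (cov1 q.1 ∧ cov1 q.2 ∧ cov2 (q.1 ∪ q.2)) then (-1 : ℤ) ^ (q.1.card + q.2.card) else 0)
      = ∑ U : Finset (VV m), ∑ q ∈ Finset.univ.filter
          (fun q : Finset (VV m) × Finset (VV m) => q.1 ∪ q.2 = U),
          (if (cov1 q.1 ∧ cov1 q.2 ∧ cov2 (q.1 ∪ q.2)) then (-1 : ℤ) ^ (q.1.card + q.2.card)
          else 0) :=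
    (Finset.sum_fiberwise _ _ _).symm
  have h3 : ∀ U : Finset (VV m),
      (∑ q ∈ Finset.univ.filter (fun q : Finset (VV m) × Finset (VV m) => q.1 ∪ q.2 = U),
        (if (cov1 q.1 ∧ cov1 q.2 ∧ cov2 (q.1 ∪ q.2)) then (-1 : ℤ) ^ (q.1.card + q.2.card)
        else 0))
      = if cov2 U then (2 * (m : ℤ) - 1) * (-1) ^ U.card else 0 := by
    intro U
    by_cases hU : cov2 U
    · rw [if_pos hU, ← fiber_eval hm U hU]
      refine Finset.sum_congr rfl (fun q hq => ?_)
      rw [Finset.mem_filter] at hq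
      rw [hq.2]
      by_cases c1 : cov1 q.1 <;> by_cases c2 : cov1 q.2 <;>
        simp [c1, c2, hU, pow_add]
    · rw [if_neg hU]
      refine Finset.sum_eq_zero (fun q hq => ?_)
      rw [Finset.mem_filter] at hq
      rw [if_neg]
      rintro ⟨-, -, hc⟩
      rw [hq.2] at hc
      exact hU hc
  have h4 : TT (m + 1) = ∑ U : Finset (VV m),
      if cov2 U then (2 * (m : ℤ) - 1) * (-1) ^ U.card else 0 := by
    rw [h1, h2]
    exact Finset.sum_congr rfl (fun U _ => h3 U)
  rw [h4, TT, Finset.mul_sum]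
  refine Finset.sum_congr rfl (fun U _ => ?_)
  by_cases h : cov2 U
  · rw [if_pos h, if_pos h]
  · rw [if_neg h, if_neg h, mul_zero]

end Recursion

lemma cov2_two_iff (W : Finset (VV 2)) : cov2 W ↔ W = Finset.univ := by
  constructor
  · intro h
    refine Finset.eq_univ_of_forall (fun f => ?_)
    obtain ⟨g, hg, hg0, hg1⟩ := h 0 1 (by decide) (f 0) (f 1)
    have hgf : g = f :=
      funext ((Fin.forall_fin_two (p := fun i => g i = f i)).mpr ⟨hg0, hg1⟩)
    rwa [← hgf]
  · rintro rfl
    intro i j hij a b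
    refine ⟨fun k => if k = i then a else b, Finset.mem_univ _, by simp, ?_⟩
    show (if j = i then a else b) = b
    rw [if_neg (Ne.symm hij)]

lemma TT_two : TT 2 = 1 := by
  rw [TT]
  have h1 : ∀ W : Finset (VV 2),
      (if cov2 W then (-1 : ℤ) ^ W.card else 0)
        = if W = Finset.univ then (-1 : ℤ) ^ W.card else 0 := by
    intro W
    by_cases h : cov2 W
    · rw [if_pos h, if_pos ((cov2_two_iff W).mp h)]
    · rw [if_neg h, if_neg (fun he => h ((cov2_two_iff W).mpr he))]
  rw [Finset.sum_congr rfl (fun W _ => h1 W), Finset.sum_ite_eq' Finset.univ Finset.univ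
    (fun W => (-1 : ℤ) ^ W.card), if_pos (Finset.mem_univ _)]
  rw [Finset.card_univ]
  norm_num [Fintype.card_fun]

lemma nonempty_of_cov2 {n : ℕ} (hn : 2 ≤ n) {σ : Finset (VV n)} (h : cov2 σ) :
    σ.Nonempty := by
  have h0 : (0 : ℕ) < n := by omega
  have h1 : (1 : ℕ) < n := by omega
  obtain ⟨f, hf, -⟩ := h ⟨0, h0⟩ ⟨1, h1⟩ (by simp [Fin.ext_iff]) true true
  exact ⟨f, hf⟩

lemma mem_theta_iff (n : ℕ) (hn : 2 ≤ n) (σ : Finset (VV n)) :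
    σ ∈ thetaComplex (cubeEdges n (n - 2)) ↔ σ.Nonempty ∧ ¬ cov2 σ := by
  have hcard : n - (n - 2) = 2 := Nat.sub_sub_self hn
  constructor
  · rintro ⟨hne, h, hmem, hdisj⟩
    refine ⟨hne, ?_⟩
    obtain ⟨s, g, hs, rfl⟩ := hmem
    rw [hcard] at hs
    obtain ⟨i, j, hij, rfl⟩ := Finset.card_eq_two.mp hs
    intro hcov
    obtain ⟨f, hf, hfi, hfj⟩ := hcov i j hij (g i) (g j)
    refine hdisj f hf ?_
    intro k hk
    rcases Finset.mem_insert.mp hk with rfl | hk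
    · exact hfi
    · rw [Finset.mem_singleton] at hk
      subst hk
      exact hfj
  · rintro ⟨hne, hcov⟩
    refine ⟨hne, ?_⟩
    rw [cov2] at hcov
    push_neg at hcov
    obtain ⟨i, j, hij, a, b, hab⟩ := hcov
    refine ⟨{f | f i = a ∧ f j = b},
      ⟨{i, j}, fun k => if k = i then a else b, ?_, ?_⟩, ?_⟩
    · rw [hcard, Finset.card_insert_of_notMem (by simp [hij]), Finset.card_singleton]
    · ext f
      simp only [Set.mem_setOf_eq]
      constructor
      · rintro ⟨h1, h2⟩ k hk
        rcases Finset.mem_insert.mp hk with rfl | hk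
        · rw [if_pos rfl]; exact h1
        · rw [Finset.mem_singleton] at hk
          subst hk
          rw [if_neg (Ne.symm hij)]
          exact h2
      · intro h
        have h1 := h i (Finset.mem_insert_self _ _)
        have h2 := h j (by simp)
        rw [if_pos rfl] at h1
        rw [if_neg (Ne.symm hij)] at h2
        exact ⟨h1, h2⟩
    · intro v hv hvh
      exact hab v hv hvh.1 hvh.2

lemma eulerChar_theta (n : ℕ) (hn : 2 ≤ n) :
    eulerChar (thetaComplex (cubeEdges n (n - 2))) = 1 + TT n := by
  classical
  haveI hfin : Fintype ↑(thetaComplex (cubeEdges n (n - 2))) :=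
    (Set.toFinite _).fintype
  rw [eulerChar, finsum_mem_eq_toFinset_sum]
  have hset : (thetaComplex (cubeEdges n (n - 2))).toFinset
      = Finset.univ.filter (fun σ : Finset (VV n) => σ.Nonempty ∧ ¬ cov2 σ) := by
    ext σ
    rw [Set.mem_toFinset, Finset.mem_filter, mem_theta_iff n hn]
    simp
  rw [hset]
  -- pointwise sign identity on nonempty sets
  have hsign : ∀ σ : Finset (VV n), σ.Nonempty →
      (-1 : ℤ) ^ (σ.card - 1) = -1 * (-1) ^ σ.card := by
    intro σ hσ
    have hc : σ.card - 1 + 1 = σ.card := Nat.succ_pred_eq_of_pos (Finset.card_pos.mpr hσ)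
    have h2 : (-1 : ℤ) * (-1) ^ σ.card = (-1) * (-1) ^ (σ.card - 1 + 1) := by rw [hc]
    rw [h2, pow_succ]
    ring
  -- sum over all subsets of signs is 0
  have hall : ∑ W : Finset (VV n), (-1 : ℤ) ^ W.card = 0 := by
    rw [← Finset.powerset_univ, Finset.sum_powerset_neg_one_pow_card, if_neg]
    intro he
    have : (fun _ => true) ∈ (Finset.univ : Finset (VV n)) := Finset.mem_univ _
    rw [he] at this
    exact absurd this (Finset.notMem_empty _)
  -- sum over nonempty subsets of signs is -1
  have hne_sum : ∑ σ ∈ Finset.univ.filter (fun σ : Finset (VV n) => σ.Nonempty),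
      (-1 : ℤ) ^ σ.card = -1 := by
    have hsplit := Finset.sum_filter_add_sum_filter_not (Finset.univ : Finset (Finset (VV n)))
      (fun σ => σ.Nonempty) (fun σ => (-1 : ℤ) ^ σ.card)
    rw [hall] at hsplit
    have hempty : (Finset.univ : Finset (Finset (VV n))).filter (fun σ => ¬ σ.Nonempty)
        = {∅} := by
      ext σ
      rw [Finset.mem_filter, Finset.mem_singleton, Finset.not_nonempty_iff_eq_empty]
      simp
    rw [hempty, Finset.sum_singleton] at hsplit
    simp only [Finset.card_empty, pow_zero] at hsplit
    linarith
  -- split the nonempty sum by cov2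
  have hsplit2 := Finset.sum_filter_add_sum_filter_not
    ((Finset.univ : Finset (Finset (VV n))).filter (fun σ => σ.Nonempty))
    (fun σ => cov2 σ) (fun σ => (-1 : ℤ) ^ (σ.card - 1))
  rw [Finset.filter_filter, Finset.filter_filter] at hsplit2
  -- the nonempty ∧ cov2 filter is just the cov2 filter
  have hfe : (Finset.univ : Finset (Finset (VV n))).filter (fun σ => σ.Nonempty ∧ cov2 σ)
      = Finset.univ.filter (fun σ => cov2 σ) := by
    ext σ
    rw [Finset.mem_filter, Finset.mem_filter]
    exact ⟨fun h => ⟨h.1, h.2.2⟩, fun h => ⟨h.1, nonempty_of_cov2 hn h.2, h.2⟩⟩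
  rw [hfe] at hsplit2
  -- Σ_{filter Nonempty} (-1)^(card-1) = 1
  have hA : ∑ σ ∈ (Finset.univ : Finset (Finset (VV n))).filter (fun σ => σ.Nonempty),
      (-1 : ℤ) ^ (σ.card - 1) = 1 := by
    have : ∑ σ ∈ (Finset.univ : Finset (Finset (VV n))).filter (fun σ => σ.Nonempty),
        (-1 : ℤ) ^ (σ.card - 1)
        = ∑ σ ∈ (Finset.univ : Finset (Finset (VV n))).filter (fun σ => σ.Nonempty),
          (-1 : ℤ) * (-1) ^ σ.card := by
      refine Finset.sum_congr rfl (fun σ hσ => ?_)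
      rw [Finset.mem_filter] at hσ
      exact hsign σ hσ.2
    rw [this, ← Finset.mul_sum, hne_sum]
    norm_num
  -- Σ_{filter cov2} (-1)^(card-1) = - TT n
  have hB : ∑ σ ∈ (Finset.univ : Finset (Finset (VV n))).filter (fun σ => cov2 σ),
      (-1 : ℤ) ^ (σ.card - 1) = -1 * TT n := by
    have h1 : ∑ σ ∈ (Finset.univ : Finset (Finset (VV n))).filter (fun σ => cov2 σ),
        (-1 : ℤ) ^ (σ.card - 1)
        = ∑ σ ∈ (Finset.univ : Finset (Finset (VV n))).filter (fun σ => cov2 σ),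
          (-1 : ℤ) * (-1) ^ σ.card := by
      refine Finset.sum_congr rfl (fun σ hσ => ?_)
      rw [Finset.mem_filter] at hσ
      exact hsign σ (nonempty_of_cov2 hn hσ.2)
    have h2 : TT n = ∑ σ ∈ (Finset.univ : Finset (Finset (VV n))).filter (fun σ => cov2 σ),
        (-1 : ℤ) ^ σ.card := by
      rw [TT, Finset.sum_filter]
    rw [h1, ← Finset.mul_sum, ← h2]
  rw [hA, hB] at hsplit2
  -- conclude
  linarith


lemma dvd_TT {p : ℕ} (hp : p.Prime) (hodd : Odd p) :
    ∀ n : ℕ, p ≤ n → (p : ℤ) ∣ TT n := by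
  obtain ⟨t, ht⟩ := hodd
  have hpt : p = 2 * t + 1 := by omega
  have ht1 : 1 ≤ t := by
    rcases Nat.eq_zero_or_pos t with h0 | h1
    · subst h0
      rw [hpt] at hp
      norm_num at hp
    · exact h1
  have hpz : ((p : ℤ)) = 2 * ((t + 1 : ℕ) : ℤ) - 1 := by
    rw [hpt]; push_cast; ring
  have hbase : (p : ℤ) ∣ TT (t + 2) := by
    have he : TT (t + 1 + 1) = (2 * ((t + 1 : ℕ) : ℤ) - 1) * TT (t + 1) :=
      TT_succ (by omega)
    rw [show t + 2 = t + 1 + 1 from rfl, he, ← hpz]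
    exact Dvd.intro _ rfl
  have hstep : ∀ k, (p : ℤ) ∣ TT (t + 2 + k) := by
    intro k
    induction k with
    | zero => exact hbase
    | succ k ih =>
      rw [show t + 2 + (k + 1) = (t + 2 + k) + 1 from rfl, TT_succ (by omega)]
      exact Dvd.dvd.mul_left ih _
  intro n hn
  have hn' : t + 2 ≤ n := by omega
  obtain ⟨k, rfl⟩ := Nat.exists_eq_add_of_le hn'
  exact hstep k

/-- For every odd prime `p` and every `n ≥ p`,
`χ(Θ(Cube(n, n-2))) ≡ 1 (mod p)`. -/
theorem eulerChar_theta_cube_codim_two (p n : ℕ) (hp : p.Prime) (hodd : Odd p)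
    (hn : p ≤ n) :
    eulerChar (thetaComplex (cubeEdges n (n - 2))) ≡ 1 [ZMOD (p : ℤ)] := by
  have hp2 : 2 ≤ p := hp.two_le
  have hp3 : 3 ≤ p := by
    obtain ⟨t, ht⟩ := hodd
    omega
  have hn2 : 2 ≤ n := le_trans (by omega) hn
  rw [eulerChar_theta n hn2]
  have hdvd : (p : ℤ) ∣ TT n := dvd_TT hp hodd n hn
  refine Int.ModEq.symm (Int.modEq_iff_dvd.mpr ?_)
  rw [show (1 + TT n) - 1 = TT n by ring]
  exact hdvd
end

section
/- Let p be an odd prime and n ≥ p, and let ℤ_p act on Cube(n, n−2) by identifying the vertices of the n-cube with subsets of {x₁,…,x_{n−p}, y₁,…,y_p} and cyclically permuting y₁,…,y_p. Then the theta complex Θ(Cube(n, n−2)/ℤ_p) of the quotient hypergraph is contractible. -/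
/-- The vertices of the `n`-cube, identified with subsets of
`{x₁, …, x_{n-p}, y₁, …, y_p}`: functions from `Fin (n-p) ⊕ ZMod p` to `Bool`.
More generally, `cubeEdgesOn ι m` is the set of faces of the cube on the
coordinate set `ι` obtained by fixing `m` coordinates; for `ι` of cardinality
`n` and `m = 2` these are the `(n-2)`-dimensional faces. -/
def cubeEdgesOn (ι : Type*) (m : ℕ) : Set (Set (ι → Bool)) :=
  {e | ∃ (s : Finset ι) (g : ι → Bool), s.card = m ∧ e = {f | ∀ i ∈ s, f i = g i}}

/-- The generator `g ∈ ℤ_p` acts on the vertices of the cube by cyclically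
permuting the `y`-coordinates (indexed by `ZMod p`) and fixing the
`x`-coordinates (indexed by `Fin m`). -/
def rotate (p m : ℕ) (g : ZMod p) (f : (Fin m ⊕ ZMod p) → Bool) :
    (Fin m ⊕ ZMod p) → Bool :=
  Sum.elim (fun j => f (Sum.inl j)) (fun j => f (Sum.inr (j - g)))

/-- Two cube vertices are related iff they are in the same `ℤ_p`-orbit. -/
def rotRel (p m : ℕ) (f f' : (Fin m ⊕ ZMod p) → Bool) : Prop :=
  ∃ g : ZMod p, f' = rotate p m g f

open Finset

section Gen
variable {V : Type*} [Fintype V] [DecidableEq V]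

/-- pushforward of weights along `R`. -/
noncomputable def pushW (R : V → V) (f : V → ℝ) : V → ℝ :=
  fun w => ∑ v ∈ univ.filter (fun v => R v = w), f v

lemma pushW_sum (R : V → V) (f : V → ℝ) : ∑ w, pushW R f w = ∑ v, f v :=
  Finset.sum_fiberwise _ _ _

lemma pushW_nonneg {R : V → V} {f : V → ℝ} (hf : ∀ v, 0 ≤ f v) (w : V) :
    0 ≤ pushW R f w := Finset.sum_nonneg fun v _ => hf v

lemma pushW_support {R : V → V} {f : V → ℝ} {σ : Finset V}
    (hs : ∀ v, f v ≠ 0 → v ∈ σ) {w : V} (hw : pushW R f w ≠ 0) : w ∈ σ.image R := by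
  obtain ⟨v, hv, hv0⟩ := Finset.exists_ne_zero_of_sum_ne_zero hw
  simp only [mem_filter, mem_univ, true_and] at hv
  exact hv ▸ Finset.mem_image_of_mem R (hs v hv0)

lemma pushW_continuous (R : V → V) (w : V) : Continuous fun f : V → ℝ => pushW R f w :=
  continuous_finset_sum _ fun v _ => continuous_apply v

omit [DecidableEq V] in
lemma mem_geomReal_of_univ (K : Set (Finset V)) (f : V → ℝ) (τ : Finset V) (hK : τ ∈ K)
    (h0 : ∀ v, 0 ≤ f v) (hsupp : ∀ v, f v ≠ 0 → v ∈ τ) (hsum : ∑ v, f v = 1) :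
    f ∈ geomReal K :=
  ⟨h0, τ, hK, hsupp, by
    rw [← hsum]
    exact (Finset.sum_subset (Finset.subset_univ τ)
      (fun x _ hx => by_contra fun h => hx (hsupp x h))).symm ▸ rfl⟩

omit [DecidableEq V] in
lemma sum_univ_eq_one_of_mem {f : V → ℝ} {σ : Finset V}
    (hsupp : ∀ v, f v ≠ 0 → v ∈ σ) (hsum : ∑ v ∈ σ, f v = 1) : ∑ v, f v = 1 := by
  rw [← hsum]
  exact (Finset.sum_subset (Finset.subset_univ σ)
    (fun x _ hx => by_contra fun h => hx (hsupp x h))).symm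

theorem contractible_geomReal_of_push (K : Set (Finset V)) (R : V → V) (v0 : V)
    (h1 : ∀ σ ∈ K, σ ∪ σ.image R ∈ K)
    (h2 : ∀ σ ∈ K, σ.image R ∪ {v0} ∈ K)
    (h0 : ({v0} : Finset V) ∈ K) :
    ContractibleSpace ↥(geomReal K) := by
  set X := ↥(geomReal K)
  have hind : (fun w => if w = v0 then (1:ℝ) else 0) ∈ geomReal K := by
    refine mem_geomReal_of_univ K _ {v0} h0 (fun v => by positivity)
      (fun v hv => by
        by_contra hne
        simp only [mem_singleton] at hne
        simp [hne] at hv)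
      (by simp)
  set x0 : X := ⟨_, hind⟩ with hx0
  have hΦmem : ∀ x : X, pushW R (x : V → ℝ) ∈ geomReal K := by
    intro x
    obtain ⟨hf0, σ, hσK, hsupp, hsum⟩ := x.2
    refine mem_geomReal_of_univ K _ (σ.image R ∪ {v0}) (h2 σ hσK)
      (pushW_nonneg hf0)
      (fun w hw => Finset.mem_union_left _ (pushW_support hsupp hw))
      (by rw [pushW_sum]; exact sum_univ_eq_one_of_mem hsupp hsum)
  set Φ : C(X, X) := ⟨fun x => ⟨pushW R (x : V → ℝ), hΦmem x⟩, by
    refine Continuous.subtype_mk ?_ _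
    exact continuous_pi fun w => (pushW_continuous R w).comp continuous_subtype_val⟩ with hΦ
  have key1 : ∀ (t : ℝ) (_ : 0 ≤ t) (_ : t ≤ 1) (x : X),
      (fun w => (1 - t) * (x : V → ℝ) w + t * pushW R (x : V → ℝ) w) ∈ geomReal K := by
    intro t ht0 ht1 x
    obtain ⟨hf0, σ, hσK, hsupp, hsum⟩ := x.2
    have hsum1 : ∑ v, (x : V → ℝ) v = 1 := sum_univ_eq_one_of_mem hsupp hsum
    refine mem_geomReal_of_univ K _ (σ ∪ σ.image R) (h1 σ hσK)
      (fun v => by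
        have h1' := hf0 v
        have h2' := pushW_nonneg hf0 (R := R) v
        have ht1' : (0:ℝ) ≤ 1 - t := by linarith
        exact add_nonneg (mul_nonneg ht1' h1') (mul_nonneg ht0 h2'))
      (fun w hw => ?_) ?_
    · by_cases h : (x : V → ℝ) w = 0
      · have h2' : pushW R (x : V → ℝ) w ≠ 0 := by
          intro h2'; apply hw; simp [h, h2']
        exact Finset.mem_union_right _ (pushW_support hsupp h2')
      · exact Finset.mem_union_left _ (hsupp w h)
    · rw [Finset.sum_add_distrib, ← Finset.mul_sum, ← Finset.mul_sum, hsum1,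
        pushW_sum, hsum1]
      ring
  have key2 : ∀ (t : ℝ) (_ : 0 ≤ t) (_ : t ≤ 1) (x : X),
      (fun w => (1 - t) * pushW R (x : V → ℝ) w + t * (if w = v0 then (1:ℝ) else 0))
        ∈ geomReal K := by
    intro t ht0 ht1 x
    obtain ⟨hf0, σ, hσK, hsupp, hsum⟩ := x.2
    have hsum1 : ∑ v, (x : V → ℝ) v = 1 := sum_univ_eq_one_of_mem hsupp hsum
    refine mem_geomReal_of_univ K _ (σ.image R ∪ {v0}) (h2 σ hσK)
      (fun v => by
        have h2' := pushW_nonneg hf0 (R := R) v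
        have h3' : (0:ℝ) ≤ if v = v0 then (1:ℝ) else 0 := by positivity
        have ht1' : (0:ℝ) ≤ 1 - t := by linarith
        exact add_nonneg (mul_nonneg ht1' h2') (mul_nonneg ht0 h3'))
      (fun w hw => ?_) ?_
    · by_cases h : pushW R (x : V → ℝ) w = 0
      · have hwv : w = v0 := by
          by_contra hne; apply hw; simp [h, hne]
        simp [hwv]
      · exact Finset.mem_union_left _ (pushW_support hsupp h)
    · rw [Finset.sum_add_distrib, ← Finset.mul_sum, ← Finset.mul_sum, pushW_sum, hsum1]
      simp only [Finset.sum_ite_eq', Finset.mem_univ, if_true]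
      ring
  have H1 : (ContinuousMap.id X).Homotopy Φ := by
    refine ⟨⟨fun q => ⟨fun w => (1 - (q.1 : ℝ)) * (q.2 : V → ℝ) w
        + (q.1 : ℝ) * pushW R (q.2 : V → ℝ) w,
        key1 q.1 q.1.2.1 q.1.2.2 q.2⟩, ?_⟩, ?_, ?_⟩
    · refine Continuous.subtype_mk ?_ _
      refine continuous_pi fun w => ?_
      have hc : Continuous fun q : unitInterval × X => (q.1 : ℝ) :=
        continuous_subtype_val.comp continuous_fst
      have hf : Continuous fun q : unitInterval × X => (q.2 : V → ℝ) w :=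
        (continuous_apply w).comp (continuous_subtype_val.comp continuous_snd)
      have hp : Continuous fun q : unitInterval × X => pushW R (q.2 : V → ℝ) w :=
        (pushW_continuous R w).comp (continuous_subtype_val.comp continuous_snd)
      exact ((continuous_const.sub hc).mul hf).add (hc.mul hp)
    · intro x; ext w; simp
    · intro x; ext w; simp [hΦ]
  have H2 : Φ.Homotopy (ContinuousMap.const X x0) := by
    refine ⟨⟨fun q => ⟨fun w => (1 - (q.1 : ℝ)) * pushW R (q.2 : V → ℝ) w
        + (q.1 : ℝ) * (if w = v0 then (1:ℝ) else 0),
        key2 q.1 q.1.2.1 q.1.2.2 q.2⟩, ?_⟩, ?_, ?_⟩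
    · refine Continuous.subtype_mk ?_ _
      refine continuous_pi fun w => ?_
      have hc : Continuous fun q : unitInterval × X => (q.1 : ℝ) :=
        continuous_subtype_val.comp continuous_fst
      have hp : Continuous fun q : unitInterval × X => pushW R (q.2 : V → ℝ) w :=
        (pushW_continuous R w).comp (continuous_subtype_val.comp continuous_snd)
      exact ((continuous_const.sub hc).mul hp).add (hc.mul continuous_const)
    · intro x; ext w; simp [hΦ]
    · intro x; ext w; simp [hx0]
  rw [contractible_iff_id_nullhomotopic]
  exact ⟨x0, ContinuousMap.Homotopic.trans ⟨H1⟩ ⟨H2⟩⟩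

end Gen

section Cube
variable (p m : ℕ)

lemma rotate_inl (g : ZMod p) (f : (Fin m ⊕ ZMod p) → Bool) (a : Fin m) :
    rotate p m g f (Sum.inl a) = f (Sum.inl a) := rfl

lemma rotate_inr (g : ZMod p) (f : (Fin m ⊕ ZMod p) → Bool) (c : ZMod p) :
    rotate p m g f (Sum.inr c) = f (Sum.inr (c - g)) := rfl

lemma rotate_rotate (a b : ZMod p) (f : (Fin m ⊕ ZMod p) → Bool) :
    rotate p m a (rotate p m b f) = rotate p m (a + b) f := by
  funext i
  cases i with
  | inl j => rfl
  | inr j => simp only [rotate_inr, sub_sub]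

lemma rotate_zero (f : (Fin m ⊕ ZMod p) → Bool) : rotate p m 0 f = f := by
  funext i
  cases i with
  | inl j => rfl
  | inr j => simp [rotate_inr]

lemma rotRel_equivalence : Equivalence (rotRel p m) := by
  constructor
  · exact fun f => ⟨0, (rotate_zero p m f).symm⟩
  · rintro f f' ⟨g, rfl⟩
    exact ⟨-g, by rw [rotate_rotate, neg_add_cancel, rotate_zero]⟩
  · rintro f f' f'' ⟨g, rfl⟩ ⟨g', rfl⟩
    exact ⟨g' + g, by rw [rotate_rotate]⟩

lemma quot_mk_eq_iff (f f' : (Fin m ⊕ ZMod p) → Bool) :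
    Quot.mk (rotRel p m) f = Quot.mk (rotRel p m) f' ↔ rotRel p m f f' :=
  Quot.eq.trans (rotRel_equivalence p m).eqvGen_iff

variable [NeZero p]

/-- number of `true` y-coordinates. -/
def countT (f : (Fin m ⊕ ZMod p) → Bool) : ℕ :=
  (univ.filter fun t : ZMod p => f (Sum.inr t) = true).card

/-- the majority y-value (`p` odd, so no ties). -/
def maj (f : (Fin m ⊕ ZMod p) → Bool) : Bool := decide (p < 2 * countT p m f)

/-- squash: keep the x-part, make the y-part constant equal to the majority value. -/
def squash (f : (Fin m ⊕ ZMod p) → Bool) : (Fin m ⊕ ZMod p) → Bool :=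
  Sum.elim (fun a => f (Sum.inl a)) (fun _ => maj p m f)

lemma squash_inl (f : (Fin m ⊕ ZMod p) → Bool) (a : Fin m) :
    squash p m f (Sum.inl a) = f (Sum.inl a) := rfl

lemma squash_inr (f : (Fin m ⊕ ZMod p) → Bool) (c : ZMod p) :
    squash p m f (Sum.inr c) = maj p m f := rfl

lemma countT_rotate (g : ZMod p) (f : (Fin m ⊕ ZMod p) → Bool) :
    countT p m (rotate p m g f) = countT p m f := by
  have himg : (univ.filter fun t : ZMod p => rotate p m g f (Sum.inr t) = true)
      = (univ.filter fun t : ZMod p => f (Sum.inr t) = true).image (· + g) := by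
    ext t
    simp only [mem_image, mem_filter, mem_univ, true_and]; simp only [rotate_inr]
    constructor
    · intro h; exact ⟨t - g, h, by ring⟩
    · rintro ⟨x, hx, rfl⟩
      rwa [add_sub_cancel_right]
  rw [countT, himg, Finset.card_image_of_injective _ (add_left_injective g)]
  rfl

lemma maj_rotate (g : ZMod p) (f : (Fin m ⊕ ZMod p) → Bool) :
    maj p m (rotate p m g f) = maj p m f := by
  simp [maj, countT_rotate]

lemma squash_rotate (g : ZMod p) (f : (Fin m ⊕ ZMod p) → Bool) :
    squash p m (rotate p m g f) = squash p m f := by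
  funext i
  cases i with
  | inl a => rfl
  | inr c => simp [squash_inr, maj_rotate]

lemma rotate_squash (g : ZMod p) (f : (Fin m ⊕ ZMod p) → Bool) :
    rotate p m g (squash p m f) = squash p m f := by
  funext i
  cases i with
  | inl a => rfl
  | inr c => rfl

lemma maj_exists (f : (Fin m ⊕ ZMod p) → Bool) :
    ∃ t : ZMod p, f (Sum.inr t) = maj p m f := by
  have hp0 : p ≠ 0 := NeZero.ne p
  by_cases h : p < 2 * countT p m f
  · have hpos : 0 < countT p m f := by omega
    obtain ⟨t, ht⟩ := Finset.card_pos.mp hpos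
    refine ⟨t, ?_⟩
    rw [(Finset.mem_filter.mp ht).2]
    simp [maj, h]
  · by_contra hc
    push_neg at hc
    have hmaj : maj p m f = false := by simp [maj, h]
    have hall : ∀ t : ZMod p, f (Sum.inr t) = true := by
      intro t
      have := hc t
      rw [hmaj] at this
      simpa using this
    have : countT p m f = p := by
      rw [countT, Finset.filter_true_of_mem (fun t _ => hall t), Finset.card_univ, ZMod.card]
    omega

lemma maj_ne_of_gap (hodd : Odd p) (f : (Fin m ⊕ ZMod p) → Bool) (β : Bool) (δ : ZMod p)
    (h : ∀ t : ZMod p, f (Sum.inr t) = β → f (Sum.inr (t + δ)) ≠ β) :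
    maj p m f ≠ β := by
  set B := univ.filter fun t : ZMod p => f (Sum.inr t) = β with hB
  have hdisj : Disjoint B (B.image (· + δ)) := by
    rw [Finset.disjoint_left]
    rintro a haB haI
    obtain ⟨t, htB, rfl⟩ := Finset.mem_image.mp haI
    exact h t (Finset.mem_filter.mp htB).2 (Finset.mem_filter.mp haB).2
  have hcard : 2 * B.card ≤ p := by
    have hu := Finset.card_union_of_disjoint hdisj
    have hle : (B ∪ B.image (· + δ)).card ≤ Fintype.card (ZMod p) :=
      Finset.card_le_univ _
    rw [hu, Finset.card_image_of_injective _ (add_left_injective δ), ZMod.card] at hle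
    omega
  have hlt : 2 * B.card < p := by
    rcases lt_or_eq_of_le hcard with h' | h'
    · exact h'
    · have heven : Even p := ⟨B.card, by omega⟩
      exact absurd hodd (Nat.not_odd_iff_even.mpr heven)
  intro hmaj
  cases β with
  | true =>
    have hcnt : countT p m f = B.card := rfl
    have : p < 2 * countT p m f := by
      have := hmaj
      simp only [maj, decide_eq_true_eq] at this
      exact this
    omega
  | false =>
    have hmaj' : ¬ p < 2 * countT p m f := by
      simpa [maj] using hmaj
    have hsplit := Finset.card_filter_add_card_filter_not
      (s := (univ : Finset (ZMod p))) (p := fun t : ZMod p => f (Sum.inr t) = true)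
    have hBeq : (univ.filter fun t : ZMod p => ¬ (f (Sum.inr t) = true)) = B := by
      apply Finset.filter_congr
      intro t _
      simp [Bool.not_eq_true]
    rw [hBeq, Finset.card_univ, ZMod.card] at hsplit
    have : countT p m f + B.card = p := hsplit
    omega

omit [NeZero p] in
/-- membership of an orbit in the image of a face, in terms of representatives. -/
lemma mem_quot_image (e : Set ((Fin m ⊕ ZMod p) → Bool)) (x : (Fin m ⊕ ZMod p) → Bool) :
    Quot.mk (rotRel p m) x ∈ (Quot.mk (rotRel p m)) '' e ↔
      ∃ g : ZMod p, rotate p m g x ∈ e := by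
  constructor
  · rintro ⟨f, hf, hQ⟩
    obtain ⟨g, rfl⟩ := (quot_mk_eq_iff p m f x).mp hQ
    refine ⟨-g, ?_⟩
    rwa [rotate_rotate, neg_add_cancel, rotate_zero]
  · rintro ⟨g, hg⟩
    exact ⟨rotate p m g x, hg, ((quot_mk_eq_iff p m x (rotate p m g x)).mpr ⟨g, rfl⟩).symm⟩

/-- Core combinatorial lemma: if the squash of `u` lies in a 2-codim face, then
some rotation of `u` lies in that face. -/
lemma core (hodd : Odd p) (e : Set ((Fin m ⊕ ZMod p) → Bool))
    (he : e ∈ cubeEdgesOn (Fin m ⊕ ZMod p) 2) (u : (Fin m ⊕ ZMod p) → Bool)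
    (hu : squash p m u ∈ e) : ∃ g : ZMod p, rotate p m g u ∈ e := by
  obtain ⟨s, gv, hcard, rfl⟩ := he
  obtain ⟨i, j, hij, rfl⟩ := Finset.card_eq_two.mp hcard
  have hi : squash p m u i = gv i := hu i (Finset.mem_insert_self i {j})
  have hj : squash p m u j = gv j :=
    hu j (Finset.mem_insert_of_mem (Finset.mem_singleton_self j))
  have key : ∃ g : ZMod p, rotate p m g u i = gv i ∧ rotate p m g u j = gv j := by
    match i, j with
    | Sum.inl a, Sum.inl b =>
      exact ⟨0, by rwa [rotate_inl], by rwa [rotate_inl]⟩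
    | Sum.inl a, Sum.inr c =>
      obtain ⟨t, ht⟩ := maj_exists p m u
      refine ⟨c - t, by rwa [rotate_inl], ?_⟩
      rw [rotate_inr, sub_sub_cancel, ht, ← squash_inr p m u c]
      exact hj
    | Sum.inr c, Sum.inl a =>
      obtain ⟨t, ht⟩ := maj_exists p m u
      refine ⟨c - t, ?_, by rwa [rotate_inl]⟩
      rw [rotate_inr, sub_sub_cancel, ht, ← squash_inr p m u c]
      exact hi
    | Sum.inr c, Sum.inr d =>
      rw [squash_inr] at hi hj
      by_contra hcon
      push_neg at hcon
      have hgap : ∀ t : ZMod p, u (Sum.inr t) = maj p m u →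
          u (Sum.inr (t + (d - c))) ≠ maj p m u := by
        intro t ht hcontra
        refine hcon (c - t) ?_ ?_
        · rw [rotate_inr, sub_sub_cancel, ht, hi]
        · rw [rotate_inr, hj.symm]
          have : d - (c - t) = t + (d - c) := by ring
          rw [this, hcontra]
      exact maj_ne_of_gap p m hodd u (maj p m u) (d - c) hgap rfl
  obtain ⟨g, hgi, hgj⟩ := key
  refine ⟨g, fun k hk => ?_⟩
  rcases Finset.mem_insert.mp hk with rfl | hk
  · exact hgi
  · rw [Finset.mem_singleton] at hk
    subst hk
    exact hgj

end Cube



/-- Let `p` be an odd prime and `n ≥ p`, and let `ℤ_p` act on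
`Cube(n, n-2)` by cyclically permuting the coordinates `y₁, …, y_p` (fixing
`x₁, …, x_{n-p}`).  Then the theta complex of the quotient hypergraph
`Cube(n, n-2)/ℤ_p` — whose vertices are the `ℤ_p`-orbits of cube vertices and
whose hyperedges are the images of the `(n-2)`-dimensional faces — is
contractible. -/
theorem theta_cube_quotient_contractible (p n : ℕ) (hp : p.Prime) (hodd : Odd p)
    (hn : p ≤ n) :
    ContractibleSpace (↥(geomReal (thetaComplex
      ((fun h => Quot.mk (rotRel p (n - p)) '' h) ''
        (cubeEdgesOn (Fin (n - p) ⊕ ZMod p) 2))))) := by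
  haveI : NeZero p := ⟨hp.pos.ne'⟩
  haveI : Fact (1 < p) := ⟨hp.one_lt⟩
  letI : DecidableEq (Quot (rotRel p (n - p))) := Classical.decEq _
  letI : Fintype (Quot (rotRel p (n - p))) := Fintype.ofSurjective _ Quot.mk_surjective
  set H : Set (Set (Quot (rotRel p (n - p)))) :=
    ((fun h => Quot.mk (rotRel p (n - p)) '' h) ''
      (cubeEdgesOn (Fin (n - p) ⊕ ZMod p) 2)) with hHdef
  -- the pushforward on orbits
  set R : Quot (rotRel p (n - p)) → Quot (rotRel p (n - p)) :=
    Quot.lift (fun f => Quot.mk (rotRel p (n - p)) (squash p (n - p) f))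
      (by rintro f f' ⟨g, rfl⟩; rw [squash_rotate]) with hRdef
  set v0 : Quot (rotRel p (n - p)) := Quot.mk (rotRel p (n - p)) (fun _ => false) with hv0def
  -- the distinguished face e₀ : y₀ = true, y₁ = false
  set s₀ : Finset (Fin (n - p) ⊕ ZMod p) :=
    {Sum.inr (0 : ZMod p), Sum.inr (1 : ZMod p)} with hs₀def
  set g₀ : (Fin (n - p) ⊕ ZMod p) → Bool :=
    fun i => decide (i = Sum.inr (0 : ZMod p)) with hg₀def
  set e₀ : Set ((Fin (n - p) ⊕ ZMod p) → Bool) := {f | ∀ i ∈ s₀, f i = g₀ i} with he₀def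
  have he₀ : e₀ ∈ cubeEdgesOn (Fin (n - p) ⊕ ZMod p) 2 := by
    refine ⟨s₀, g₀, ?_, rfl⟩
    rw [hs₀def, Finset.card_pair]
    intro h
    exact zero_ne_one (Sum.inr.inj h)
  have hsq₀ : ∀ u : (Fin (n - p) ⊕ ZMod p) → Bool, squash p (n - p) u ∉ e₀ := by
    intro u hmem
    have h0' := hmem (Sum.inr 0) (Finset.mem_insert_self _ _)
    have h1' := hmem (Sum.inr 1)
      (Finset.mem_insert_of_mem (Finset.mem_singleton_self _))
    rw [squash_inr] at h0' h1'
    have hg0 : g₀ (Sum.inr (0 : ZMod p)) = true := by simp [hg₀def]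
    have hg1 : g₀ (Sum.inr (1 : ZMod p)) = false := by
      simp only [hg₀def, decide_eq_false_iff_not]
      intro h
      exact one_ne_zero (Sum.inr.inj h)
    rw [hg0] at h0'
    rw [hg1] at h1'
    rw [h0'] at h1'
    simp at h1'
  have hrotfalse : ∀ g : ZMod p,
      rotate p (n - p) g (fun _ => false) = (fun _ => false) := by
    intro g; funext i; cases i <;> rfl
  have hfalse₀ : (fun _ => false) ∉ e₀ := by
    intro hmem
    have h0' := hmem (Sum.inr 0) (Finset.mem_insert_self _ _)
    simp [hg₀def] at h0'
  -- membership of squash-orbits and v0 in quotient images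
  have hRnot : ∀ (e : Set ((Fin (n - p) ⊕ ZMod p) → Bool)),
      e ∈ cubeEdgesOn (Fin (n - p) ⊕ ZMod p) 2 →
      ∀ u : (Fin (n - p) ⊕ ZMod p) → Bool,
      Quot.mk (rotRel p (n - p)) u ∉ Quot.mk (rotRel p (n - p)) '' e →
      Quot.mk (rotRel p (n - p)) (squash p (n - p) u) ∉ Quot.mk (rotRel p (n - p)) '' e := by
    intro e he u hu hmem
    rw [mem_quot_image] at hmem
    obtain ⟨g, hg⟩ := hmem
    rw [rotate_squash] at hg
    obtain ⟨g', hg'⟩ := core p (n - p) hodd e he u hg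
    exact hu ((mem_quot_image p (n - p) e u).mpr ⟨g', hg'⟩)
  have hsqnot₀ : ∀ u : (Fin (n - p) ⊕ ZMod p) → Bool,
      Quot.mk (rotRel p (n - p)) (squash p (n - p) u) ∉ Quot.mk (rotRel p (n - p)) '' e₀ := by
    intro u hmem
    rw [mem_quot_image] at hmem
    obtain ⟨g, hg⟩ := hmem
    rw [rotate_squash] at hg
    exact hsq₀ u hg
  have hv0not₀ : v0 ∉ Quot.mk (rotRel p (n - p)) '' e₀ := by
    intro hmem
    rw [hv0def, mem_quot_image] at hmem
    obtain ⟨g, hg⟩ := hmem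
    rw [hrotfalse] at hg
    exact hfalse₀ hg
  apply contractible_geomReal_of_push (thetaComplex H) R v0
  · -- h1
    rintro σ ⟨hne, h, hH, havoid⟩
    refine ⟨hne.mono Finset.subset_union_left, h, hH, ?_⟩
    intro v hv
    rcases Finset.mem_union.mp hv with hv | hv
    · exact havoid v hv
    · obtain ⟨v', hv', rfl⟩ := Finset.mem_image.mp hv
      obtain ⟨u, rfl⟩ := Quot.exists_rep v'
      obtain ⟨e, he, rfl⟩ := hH
      exact hRnot e he u (havoid _ hv')
  · -- h2
    rintro σ ⟨hne, h, hH, havoid⟩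
    refine ⟨⟨v0, Finset.mem_union_right _ (Finset.mem_singleton_self _)⟩,
      Quot.mk (rotRel p (n - p)) '' e₀, ⟨e₀, he₀, rfl⟩, ?_⟩
    intro v hv
    rcases Finset.mem_union.mp hv with hv | hv
    · obtain ⟨v', _, rfl⟩ := Finset.mem_image.mp hv
      obtain ⟨u, rfl⟩ := Quot.exists_rep v'
      exact hsqnot₀ u
    · rw [Finset.mem_singleton] at hv
      subst hv
      exact hv0not₀
  · -- h0
    refine ⟨Finset.singleton_nonempty v0,
      Quot.mk (rotRel p (n - p)) '' e₀, ⟨e₀, he₀, rfl⟩, ?_⟩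
    intro v hv
    rw [Finset.mem_singleton] at hv
    subst hv
    exact hv0not₀
end
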